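/- Let (G, ℓ) be a finite connected graph with positive edge resistances, and regard the Ricci–Foster curvature K_e as a function of the edge resistances {ℓ_f : f ∈ E}. Then for every edge e, the partial derivative of K_e with respect to its own resistance is nonnegative: ∂K_e/∂ℓ_e ≥ 0. -/

import Mathlib

open Finset

section RicciFoster

variable {V E : Type} [Fintype V] [Fintype E] [DecidableEq V] [DecidableEq E]

/-- One adjacency step: `a` and `b` are joined by an edge in `T`,
or identified by the relation `R`. -/
def stepRel (ends : E → V × V) (T : Finset E) (R : V → V → Prop) (a b : V) : Prop :=
  (∃ e ∈ T, ends e = (a, b) ∨ ends e = (b, a)) ∨ R a b ∨ R b a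

/-- The edge set `T`, together with the identifications `R`, connects all vertices. -/
def Connects (ends : E → V × V) (T : Finset E) (R : V → V → Prop) : Prop :=
  ∀ a b : V, Relation.ReflTransGen (stepRel ends T R) a b

/-- The (multi)graph with vertex set `V`, edge set `E` and endpoint map `ends` is connected. -/
def ConnectedG (ends : E → V × V) : Prop :=
  Connects ends Finset.univ (fun _ _ => False)

open scoped Classical in
/-- Weighted spanning-tree polynomial `τ(G; ℓ) = Σ_{spanning trees T} Π_{e ∉ T} ℓ_e`.
A spanning tree is an edge set with `|V| - 1` edges connecting all vertices. -/
noncomputable def treePoly (ends : E → V × V) (ℓ : E → ℝ) : ℝ :=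
  ∑ T ∈ Finset.univ.filter
      (fun T : Finset E => T.card + 1 = Fintype.card V ∧
        Connects ends T (fun _ _ => False)),
    ∏ e ∈ Tᶜ, ℓ e

open scoped Classical in
/-- Weighted spanning-tree polynomial `τ(G/xy; ℓ)` of the contraction `G/xy`:
spanning trees of `G/xy` are edge sets of `G` with `|V| - 2` edges which connect
all vertices once `x` and `y` are identified. -/
noncomputable def treePolyContract (ends : E → V × V) (x y : V) (ℓ : E → ℝ) : ℝ :=
  ∑ T ∈ Finset.univ.filter
      (fun T : Finset E => T.card + 2 = Fintype.card V ∧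
        Connects ends T (fun a b => a = x ∧ b = y)),
    ∏ e ∈ Tᶜ, ℓ e

/-- Effective resistance `ω_xy = τ(G/xy; ℓ) / τ(G; ℓ)`. -/
noncomputable def effRes (ends : E → V × V) (x y : V) (ℓ : E → ℝ) : ℝ :=
  treePolyContract ends x y ℓ / treePoly ends ℓ

/-- Degree of a vertex (a loop counts twice). -/
def degreeG (ends : E → V × V) (v : V) : ℕ :=
  ∑ e : E, ((if (ends e).1 = v then 1 else 0) + (if (ends e).2 = v then 1 else 0))

/-- Ricci–Foster curvature `K_e = 1/deg u + 1/deg v − ω_uv/ℓ_e` of the edge `e = uv`. -/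
noncomputable def curv (ends : E → V × V) (ℓ : E → ℝ) (e : E) : ℝ :=
  (degreeG ends (ends e).1 : ℝ)⁻¹ + (degreeG ends (ends e).2 : ℝ)⁻¹
    - effRes ends (ends e).1 (ends e).2 ℓ / ℓ e

/-- `ℓ : ℝ → E → ℝ` is a solution of the Ricci–Foster flow on `[0, T)`:
the resistances stay positive and `dℓ_e/dt = −K_e(ℓ(t))` for every edge `e`. -/
def IsRicciFlow (ends : E → V × V) (T : ℝ) (ℓ : ℝ → E → ℝ) : Prop :=
  ∀ t ∈ Set.Ico (0 : ℝ) T,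
    (∀ e, 0 < ℓ t e) ∧
    (∀ e, HasDerivWithinAt (fun s => ℓ s e) (-(curv ends (ℓ t) e)) (Set.Ico (0 : ℝ) T) t)

end RicciFoster

/-- Any sum of products `∑_{T∈S} ∏_{f∈Tᶜ} ℓ_f` is an affine function of `ℓ e`
with nonnegative coefficients. -/
lemma exists_linear {E : Type} [Fintype E] [DecidableEq E]
    (S : Finset (Finset E)) (ℓ : E → ℝ) (hpos : ∀ f, 0 < ℓ f) (e : E) :
    ∃ A B : ℝ, 0 ≤ A ∧ 0 ≤ B ∧
      ∀ u : ℝ, (∑ T ∈ S, ∏ f ∈ Tᶜ, Function.update ℓ e u f) = A * u + B := by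
  classical
  refine ⟨∑ T ∈ S, if e ∈ Tᶜ then ∏ f ∈ Tᶜ.erase e, ℓ f else 0,
    ∑ T ∈ S, if e ∈ Tᶜ then 0 else ∏ f ∈ Tᶜ, ℓ f, ?_, ?_, ?_⟩
  · refine Finset.sum_nonneg fun T _ => ?_
    split
    · exact Finset.prod_nonneg fun f _ => (hpos f).le
    · exact le_rfl
  · refine Finset.sum_nonneg fun T _ => ?_
    split
    · exact le_rfl
    · exact Finset.prod_nonneg fun f _ => (hpos f).le
  · intro u
    rw [Finset.sum_mul, ← Finset.sum_add_distrib]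
    refine Finset.sum_congr rfl fun T _ => ?_
    by_cases h : e ∈ Tᶜ
    · rw [Finset.prod_update_of_mem h]
      simp only [Finset.sdiff_singleton_eq_erase, if_pos h, add_zero, mul_comm]
    · rw [Finset.prod_update_of_notMem h]
      simp [h]

/-- Proposition `prop:curvature-partials`(a): the curvature of an edge
is nondecreasing in its own resistance: `∂K_e/∂ℓ_e ≥ 0`. -/
theorem curvature_partial_own_nonneg
    {V E : Type} [Fintype V] [Fintype E] [DecidableEq V] [DecidableEq E]
    (ends : E → V × V) (hG : ConnectedG ends)
    (ℓ : E → ℝ) (hpos : ∀ f, 0 < ℓ f) (e : E) :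
    0 ≤ deriv (fun u : ℝ => curv ends (Function.update ℓ e u) e) (ℓ e) := by
  classical
  obtain ⟨A, B, hA, hB, hD⟩ := exists_linear
    (Finset.univ.filter (fun T : Finset E => T.card + 1 = Fintype.card V ∧
      Connects ends T (fun _ _ => False))) ℓ hpos e
  obtain ⟨A', B', hA', hB', hN⟩ := exists_linear
    (Finset.univ.filter (fun T : Finset E => T.card + 2 = Fintype.card V ∧
      Connects ends T (fun a b => a = (ends e).1 ∧ b = (ends e).2))) ℓ hpos e
  have hDpoly : ∀ u : ℝ, treePoly ends (Function.update ℓ e u) = A * u + B :=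
    fun u => hD u
  have hNpoly : ∀ u : ℝ,
      treePolyContract ends (ends e).1 (ends e).2 (Function.update ℓ e u) = A' * u + B' :=
    fun u => hN u
  set c : ℝ := (degreeG ends (ends e).1 : ℝ)⁻¹ + (degreeG ends (ends e).2 : ℝ)⁻¹ with hc
  have hcurv : ∀ u : ℝ, curv ends (Function.update ℓ e u) e
      = c - (A' * u + B') / ((A * u + B) * u) := by
    intro u
    rw [curv, effRes, hDpoly u, hNpoly u, Function.update_self, div_div, hc]
  set x : ℝ := ℓ e with hxdef
  have hx : 0 < x := hpos e
  have hABx : 0 ≤ A * x + B := add_nonneg (mul_nonneg hA hx.le) hB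
  rcases hABx.eq_or_lt with hzero | hposD
  · -- degenerate case: the denominator vanishes identically, curvature is constant
    have hAx : A * x = 0 ∧ B = 0 := by constructor <;> nlinarith [mul_nonneg hA hx.le]
    have hA0 : A = 0 := by
      rcases mul_eq_zero.mp hAx.1 with h | h
      · exact h
      · exact absurd h hx.ne'
    have hB0 : B = 0 := hAx.2
    have hconst : (fun u : ℝ => curv ends (Function.update ℓ e u) e) = fun _ => c := by
      funext u
      rw [hcurv u, hA0, hB0]
      simp
    rw [hconst, deriv_const]
  · -- nondegenerate case: compute the derivative explicitly
    have hne : (A * x + B) * x ≠ 0 := (mul_pos hposD hx).ne'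
    have hg : HasDerivAt (fun u : ℝ => A' * u + B') A' x := by
      simpa using ((hasDerivAt_id x).const_mul A').add_const B'
    have h1 : HasDerivAt (fun u : ℝ => A * u + B) A x := by
      simpa using ((hasDerivAt_id x).const_mul A).add_const B
    have hh : HasDerivAt (fun u : ℝ => (A * u + B) * u) (A * x + (A * x + B)) x := by
      exact (h1.mul (hasDerivAt_id' x)).congr_deriv (by ring)
    have hdiv : HasDerivAt (fun u : ℝ => (A' * u + B') / ((A * u + B) * u))
        ((A' * ((A * x + B) * x) - (A' * x + B') * (A * x + (A * x + B)))
          / ((A * x + B) * x) ^ 2) x := hg.div hh hne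
    have hF : HasDerivAt (fun u : ℝ => c - (A' * u + B') / ((A * u + B) * u))
        (-((A' * ((A * x + B) * x) - (A' * x + B') * (A * x + (A * x + B)))
          / ((A * x + B) * x) ^ 2)) x := hdiv.const_sub c
    have hfun : (fun u : ℝ => curv ends (Function.update ℓ e u) e)
        = fun u : ℝ => c - (A' * u + B') / ((A * u + B) * u) := funext hcurv
    rw [hfun, hF.deriv]
    have hnum : A' * ((A * x + B) * x) - (A' * x + B') * (A * x + (A * x + B)) ≤ 0 := by
      nlinarith [mul_nonneg (mul_nonneg hA hA') (sq_nonneg x),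
        mul_nonneg hB hB', mul_nonneg (mul_nonneg hA hB') hx.le]
    have : 0 ≤ (-(A' * ((A * x + B) * x) - (A' * x + B') * (A * x + (A * x + B))))
        / ((A * x + B) * x) ^ 2 :=
      div_nonneg (by linarith) (sq_nonneg _)
    calc (0:ℝ) ≤ _ := this
      _ = _ := by rw [neg_div]
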